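/- Let A be a unital based ring of finite rank with basis (b_i). The assignment b_i ↦ λ_i, where λ_i is the largest nonnegative real eigenvalue of the matrix of left multiplication by b_i in the basis (b_j), extends to a ring homomorphism A → ℝ. -/

import Mathlib

open Finset in
theorem perron_exists {ι : Type*} [Fintype ι] [DecidableEq ι] [Nonempty ι]
    (R : Matrix ι ι ℝ) (hR : ∀ k j, 0 < R k j) :
    ∃ t : ℝ, 0 < t ∧ ∃ v : ι → ℝ, (∀ k, 0 < v k) ∧ R.mulVec v = t • v ∧
      ∀ w : ι → ℝ, (∀ k, 0 ≤ w k) → R.mulVec w = t • w → ∃ c : ℝ, w = c • v := by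
  classical
  set B : ℝ := ∑ k, ∑ j, R k j with hB
  have hmv : ∀ (v : ι → ℝ) (k : ι), R.mulVec v k = ∑ j, R k j * v j := by
    intro v k; simp [Matrix.mulVec, dotProduct]
  have hbound : ∀ (t : ℝ) (v : ι → ℝ), (∀ k, 0 ≤ v k) → (∑ k, v k) = 1 →
      (∀ k, t * v k ≤ ∑ j, R k j * v j) → t ≤ B := by
    intro t v hv hs hle
    have h1 : ∀ j, v j ≤ 1 := by
      intro j
      calc v j ≤ ∑ k, v k := Finset.single_le_sum (fun k _ => hv k) (mem_univ j)
        _ = 1 := hs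
    calc t = ∑ k, t * v k := by rw [← Finset.mul_sum, hs, mul_one]
      _ ≤ ∑ k, ∑ j, R k j * v j := Finset.sum_le_sum fun k _ => hle k
      _ ≤ ∑ k, ∑ j, R k j := by
          refine Finset.sum_le_sum fun k _ => Finset.sum_le_sum fun j _ => ?_
          nlinarith [hR k j, h1 j, hv j]
  set K : Set (ℝ × (ι → ℝ)) := {p | 0 ≤ p.1 ∧ (∀ k, 0 ≤ p.2 k) ∧ (∑ k, p.2 k) = 1 ∧
      ∀ k, p.1 * p.2 k ≤ ∑ j, R k j * p.2 j} with hKdef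
  have hKc : IsClosed K := by
    have c1 : IsClosed {p : ℝ × (ι → ℝ) | 0 ≤ p.1} := isClosed_le continuous_const continuous_fst
    have c2 : IsClosed {p : ℝ × (ι → ℝ) | ∀ k, 0 ≤ p.2 k} := by
      rw [Set.setOf_forall]
      exact isClosed_iInter fun k =>
        isClosed_le continuous_const ((continuous_apply k).comp continuous_snd)
    have c3 : IsClosed {p : ℝ × (ι → ℝ) | (∑ k, p.2 k) = 1} :=
      isClosed_eq (continuous_finset_sum _ fun k _ => (continuous_apply k).comp continuous_snd)
        continuous_const
    have c4 : IsClosed {p : ℝ × (ι → ℝ) | ∀ k, p.1 * p.2 k ≤ ∑ j, R k j * p.2 j} := by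
      rw [Set.setOf_forall]
      exact isClosed_iInter fun k => isClosed_le
        (continuous_fst.mul ((continuous_apply k).comp continuous_snd))
        (continuous_finset_sum _ fun j _ =>
          continuous_const.mul ((continuous_apply j).comp continuous_snd))
    exact c1.inter (c2.inter (c3.inter c4))
  have hsub : K ⊆ Set.Icc ((0:ℝ), fun _ => (0:ℝ)) (B, fun _ => (1:ℝ)) := by
    rintro ⟨t, v⟩ ⟨h0, hvnn, hvs, hle⟩
    refine ⟨⟨h0, fun k => hvnn k⟩, ⟨hbound t v hvnn hvs hle, fun k => ?_⟩⟩
    calc v k ≤ ∑ j, v j := Finset.single_le_sum (fun j _ => hvnn j) (mem_univ k)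
      _ = 1 := hvs
  have hKcpt : IsCompact K := IsCompact.of_isClosed_subset isCompact_Icc hKc hsub
  -- nonemptiness with a positive t
  have hn : (0:ℝ) < (Fintype.card ι : ℝ) := by
    exact_mod_cast Fintype.card_pos
  set v0 : ι → ℝ := fun _ => (Fintype.card ι : ℝ)⁻¹ with hv0
  have hv0nn : ∀ k, 0 ≤ v0 k := fun k => (inv_pos.mpr hn).le
  have hv0s : (∑ k, v0 k) = 1 := by
    simp [hv0, Finset.sum_const, Finset.card_univ]
  set t1 : ℝ := univ.inf' univ_nonempty (fun k => ∑ j, R k j * v0 j) with ht1def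
  have ht1 : 0 < t1 := by
    rw [ht1def, Finset.lt_inf'_iff]
    intro k _
    exact Finset.sum_pos (fun j _ => mul_pos (hR k j) (inv_pos.mpr hn)) univ_nonempty
  have hmem : ((t1, v0) : ℝ × (ι → ℝ)) ∈ K := by
    refine ⟨ht1.le, hv0nn, hv0s, fun k => ?_⟩
    have h1 : t1 ≤ ∑ j, R k j * v0 j := Finset.inf'_le _ (mem_univ k)
    have h2 : v0 k ≤ 1 := by
      calc v0 k ≤ ∑ j, v0 j := Finset.single_le_sum (fun j _ => hv0nn j) (mem_univ k)
        _ = 1 := hv0s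
    nlinarith [hv0nn k, ht1]
  obtain ⟨⟨t, v⟩, hpK, hpmax⟩ := hKcpt.exists_isMaxOn ⟨(t1, v0), hmem⟩
    continuous_fst.continuousOn
  have hmax : ∀ q ∈ K, q.1 ≤ t := fun q hq => hpmax hq
  obtain ⟨ht0, hvnn0, hvs0, hle0⟩ := hpK
  have hvnn : ∀ k, 0 ≤ v k := hvnn0
  have hvs : (∑ k, v k) = 1 := hvs0
  have hle : ∀ k, t * v k ≤ ∑ j, R k j * v j := hle0
  have htpos : 0 < t := lt_of_lt_of_le ht1 (hmax (t1, v0) hmem)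
  have hvex : ∃ j, 0 < v j := by
    by_contra h
    push_neg at h
    have : (∑ k, v k) = 0 := le_antisymm (Finset.sum_nonpos fun k _ => h k)
      (Finset.sum_nonneg fun k _ => hvnn k)
    rw [hvs] at this; norm_num at this
  have hpos_mul : ∀ (x : ι → ℝ), (∀ k, 0 ≤ x k) → (∃ j, 0 < x j) →
      ∀ k, 0 < R.mulVec x k := by
    rintro x hx ⟨j, hj⟩ k
    rw [hmv]
    exact Finset.sum_pos' (fun j _ => mul_nonneg (hR k j).le (hx j))
      ⟨j, mem_univ j, mul_pos (hR k j) hj⟩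
  -- the fixed point equation
  have hfix : R.mulVec v = t • v := by
    by_contra hne
    set w : ι → ℝ := fun k => R.mulVec v k - t * v k with hwdef
    have hwnn : ∀ k, 0 ≤ w k := by
      intro k; rw [hwdef]; simp only; rw [hmv]; linarith [hle k]
    have hwex : ∃ k, 0 < w k := by
      by_contra h
      push_neg at h
      apply hne
      funext k
      have h1 : w k = 0 := le_antisymm (h k) (hwnn k)
      have : R.mulVec v k - t * v k = 0 := h1
      simp [Pi.smul_apply, smul_eq_mul]
      linarith
    have hu : ∀ k, 0 < R.mulVec v k := hpos_mul v hvnn hvex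
    have hwpos : ∀ k, 0 < R.mulVec w k := hpos_mul w hwnn hwex
    set u := R.mulVec v with hudef
    have hweq : w = u - t • v := by
      funext k; simp [hwdef, hudef, Pi.smul_apply, smul_eq_mul]
    have hRu : R.mulVec u = t • u + R.mulVec w := by
      rw [hweq, Matrix.mulVec_sub, Matrix.mulVec_smul]
      abel
    set ε : ℝ := univ.inf' univ_nonempty (fun k => R.mulVec w k / u k) with hedef
    have hε : 0 < ε := by
      rw [hedef, Finset.lt_inf'_iff]
      exact fun k _ => div_pos (hwpos k) (hu k)
    have hεle : ∀ k, ε * u k ≤ R.mulVec w k := by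
      intro k
      have h1 : ε ≤ R.mulVec w k / u k := Finset.inf'_le _ (mem_univ k)
      exact (le_div_iff₀ (hu k)).mp h1
    have hkey : ∀ k, (t + ε) * u k ≤ R.mulVec u k := by
      intro k
      have h1 := congrFun hRu k
      simp only [Pi.add_apply, Pi.smul_apply, smul_eq_mul] at h1
      nlinarith [hεle k]
    set s : ℝ := ∑ k, u k with hsdef
    have hs : 0 < s := Finset.sum_pos (fun k _ => hu k) univ_nonempty
    have hmem2 : ((t + ε, s⁻¹ • u) : ℝ × (ι → ℝ)) ∈ K := by
      refine ⟨by positivity, fun k => by simp only [Pi.smul_apply, smul_eq_mul]; exact mul_nonneg (by positivity) (hu k).le, ?_, ?_⟩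
      · simp only [Pi.smul_apply, smul_eq_mul]
        rw [← Finset.mul_sum, ← hsdef]
        exact inv_mul_cancel₀ hs.ne'
      · intro k
        have h1 : ∑ j, R k j * (s⁻¹ • u) j = s⁻¹ * R.mulVec u k := by
          rw [hmv]; rw [Finset.mul_sum]
          refine Finset.sum_congr rfl fun j _ => ?_
          simp [Pi.smul_apply, smul_eq_mul]; ring
        rw [h1]
        simp only [Pi.smul_apply, smul_eq_mul]
        have := hkey k
        have hsi : 0 ≤ s⁻¹ := by positivity
        nlinarith
    have := hmax _ hmem2
    simp only at this
    linarith
  have hvpos : ∀ k, 0 < v k := by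
    intro k
    have h1 : 0 < R.mulVec v k := hpos_mul v hvnn hvex k
    rw [hfix] at h1
    simp only [Pi.smul_apply, smul_eq_mul] at h1
    rcases (hvnn k).lt_or_eq with h | h
    · exact h
    · exfalso; rw [← h, mul_zero] at h1; exact lt_irrefl _ h1
  refine ⟨t, htpos, v, hvpos, hfix, ?_⟩
  intro w hwnn hweig
  set c : ℝ := univ.inf' univ_nonempty (fun k => w k / v k) with hcdef
  obtain ⟨k0, _, hk0⟩ := Finset.exists_mem_eq_inf' univ_nonempty (fun k => w k / v k)
  have hcle : ∀ k, c * v k ≤ w k := by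
    intro k
    have h1 : c ≤ w k / v k := Finset.inf'_le _ (mem_univ k)
    exact (le_div_iff₀ (hvpos k)).mp h1
  set w' : ι → ℝ := fun k => w k - c * v k with hw'def
  have hw'nn : ∀ k, 0 ≤ w' k := fun k => by simp [hw'def]; linarith [hcle k]
  have hc' : c = w k0 / v k0 := hk0
  have hw'k0 : w' k0 = 0 := by
    show w k0 - c * v k0 = 0
    rw [hc', div_mul_cancel₀ _ (hvpos k0).ne', sub_self]
  have hw'eig : R.mulVec w' = t • w' := by
    have : w' = w - c • v := by funext k; simp [hw'def, Pi.smul_apply, smul_eq_mul]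
    rw [this, Matrix.mulVec_sub, Matrix.mulVec_smul, hweig, hfix]
    funext k
    simp [Pi.smul_apply, smul_eq_mul]
    ring
  by_cases hz : w' = 0
  · refine ⟨c, ?_⟩
    funext k
    have : w' k = 0 := by rw [hz]; rfl
    simp only [hw'def] at this
    simp [Pi.smul_apply, smul_eq_mul]
    linarith
  · exfalso
    have hex : ∃ k, 0 < w' k := by
      by_contra h
      push_neg at h
      exact hz (funext fun k => le_antisymm (h k) (hw'nn k))
    have h1 : 0 < R.mulVec w' k0 := hpos_mul w' hw'nn hex k0
    rw [hw'eig] at h1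
    simp [Pi.smul_apply, smul_eq_mul, hw'k0] at h1


open Finset in
theorem eig_compare {ι : Type*} [Fintype ι] [DecidableEq ι] [Nonempty ι]
    (M : Matrix ι ι ℝ) (hM : ∀ k j, 0 ≤ M k j) (v : ι → ℝ) (hv : ∀ k, 0 < v k)
    (d : ℝ) (hMv : M.mulVec v = d • v) (t : ℝ) (ht : 0 ≤ t) (w : ι → ℝ)
    (hw : w ≠ 0) (htw : M.mulVec w = t • w) : t ≤ d := by
  classical
  have hmv : ∀ (x : ι → ℝ) (k : ι), M.mulVec x k = ∑ j, M k j * x j := by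
    intro x k; simp [Matrix.mulVec, dotProduct]
  set u : ι → ℝ := fun k => |w k| with hudef
  set c : ℝ := univ.sup' univ_nonempty (fun k => u k / v k) with hcdef
  obtain ⟨k1, _, hk1⟩ := Finset.exists_mem_eq_sup' univ_nonempty (fun k => u k / v k)
  have hc1 : c = u k1 / v k1 := hk1
  have hcu : ∀ k, u k ≤ c * v k := by
    intro k
    have h1 : u k / v k ≤ c := Finset.le_sup' (fun k => u k / v k) (mem_univ k)
    exact (div_le_iff₀ (hv k)).mp h1
  have huk1 : u k1 = c * v k1 := by
    rw [hc1, div_mul_cancel₀ _ (hv k1).ne']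
  have hc0 : 0 < c := by
    obtain ⟨k, hk⟩ := Function.ne_iff.mp hw
    have h1 : 0 < u k := abs_pos.mpr hk
    have h2 : u k / v k ≤ c := Finset.le_sup' (fun k => u k / v k) (mem_univ k)
    have := div_pos h1 (hv k)
    linarith
  have huk1pos : 0 < u k1 := by rw [huk1]; exact mul_pos hc0 (hv k1)
  have hstep : t * u k1 ≤ d * u k1 := by
    have h1 : t * u k1 = |M.mulVec w k1| := by
      rw [htw]
      simp [Pi.smul_apply, smul_eq_mul, abs_mul, abs_of_nonneg ht, hudef]
    have h2 : |M.mulVec w k1| ≤ ∑ j, M k1 j * u j := by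
      rw [hmv]
      refine le_trans (Finset.abs_sum_le_sum_abs _ _) (Finset.sum_le_sum fun j _ => ?_)
      rw [abs_mul, abs_of_nonneg (hM k1 j)]
    have h3 : ∑ j, M k1 j * u j ≤ ∑ j, M k1 j * (c * v j) :=
      Finset.sum_le_sum fun j _ => mul_le_mul_of_nonneg_left (hcu j) (hM k1 j)
    have h4 : ∑ j, M k1 j * (c * v j) = c * (d * v k1) := by
      have : ∑ j, M k1 j * (c * v j) = c * ∑ j, M k1 j * v j := by
        rw [Finset.mul_sum]; exact Finset.sum_congr rfl fun j _ => by ring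
      rw [this, ← hmv, hMv]
      simp [Pi.smul_apply, smul_eq_mul]
    have h5 : c * (d * v k1) = d * u k1 := by rw [huk1]; ring
    linarith
  exact le_of_mul_le_mul_right (by linarith [hstep]) huk1pos



open Finset

/-- In a unital based ring of finite rank (Lusztig), the assignment sending each basis
element `b i` to the largest nonnegative real eigenvalue of its left-multiplication matrix
extends to a ring homomorphism `A → ℝ`. -/
theorem stmt3 (A : Type*) [Ring A] (ι : Type*) [Fintype ι] [DecidableEq ι]
    (b : Module.Basis ι ℤ A) (i0 : ι) (hone : b i0 = 1)
    (σ : ι → ι) (hσ : ∀ i, σ (σ i) = i)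
    (hnn : ∀ i j k, 0 ≤ b.repr (b i * b j) k)
    (hdual : ∀ i j, b.repr (b i * b j) i0 = if j = σ i then 1 else 0)
    -- the left-multiplication matrix of `b i` (row `k`, column `j`)
    (M : ι → Matrix ι ι ℝ) (hM : ∀ i k j, M i k j = (b.repr (b i * b j) k : ℤ))
    -- `lam i` is the largest nonnegative real eigenvalue of `M i`
    (lam : ι → ℝ)
    (hlam : ∀ i, lam i ∈ {t : ℝ | 0 ≤ t ∧ ∃ v : ι → ℝ, v ≠ 0 ∧ (M i).mulVec v = t • v} ∧
      ∀ t ∈ {t : ℝ | 0 ≤ t ∧ ∃ v : ι → ℝ, v ≠ 0 ∧ (M i).mulVec v = t • v}, t ≤ lam i) :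
    ∃ φ : A →+* ℝ, ∀ i, φ (b i) = lam i := by
  classical
  haveI : Nonempty ι := ⟨i0⟩
  -- expansion of the second factor
  have mulrepr : ∀ (x z : A) (k : ι),
      b.repr (x * z) k = ∑ m, b.repr z m * b.repr (x * b m) k := by
    intro x z k
    have h1 : x * z = ∑ m, b.repr z m • (x * b m) := by
      conv_lhs => rw [← Module.Basis.sum_repr b z]
      rw [Finset.mul_sum]
      exact Finset.sum_congr rfl fun m _ => mul_smul_comm _ _ _
    rw [h1, map_sum, Finsupp.coe_finset_sum, Finset.sum_apply]
    refine Finset.sum_congr rfl fun m _ => ?_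
    rw [map_smul, Finsupp.smul_apply, smul_eq_mul]
  -- expansion of the first factor
  have mulrepr' : ∀ (x z : A) (k : ι),
      b.repr (x * z) k = ∑ m, b.repr x m * b.repr (b m * z) k := by
    intro x z k
    have h1 : x * z = ∑ m, b.repr x m • (b m * z) := by
      conv_lhs => rw [← Module.Basis.sum_repr b x]
      rw [Finset.sum_mul]
      exact Finset.sum_congr rfl fun m _ => smul_mul_assoc _ _ _
    rw [h1, map_sum, Finsupp.coe_finset_sum, Finset.sum_apply]
    refine Finset.sum_congr rfl fun m _ => ?_
    rw [map_smul, Finsupp.smul_apply, smul_eq_mul]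
  have hMnn : ∀ i k j, 0 ≤ M i k j := by
    intro i k j; rw [hM]; exact_mod_cast hnn i j k
  -- the element z = sum of all basis vectors, and right multiplication by it
  set z : A := ∑ p, b p with hzdef
  have hreprz : ∀ (x : A) (k : ι), b.repr (x * z) k = ∑ p, b.repr (x * b p) k := by
    intro x k
    rw [hzdef, Finset.mul_sum, map_sum]
    simp
  set R : Matrix ι ι ℝ := Matrix.of fun k j => ((b.repr (b j * z) k : ℤ) : ℝ) with hRdef
  have hRpos : ∀ k j, 0 < R k j := by
    intro k j
    have hterm : ∀ p, 0 ≤ b.repr (b j * b p) k := fun p => hnn j p k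
    -- 1 ≤ repr (b j * (b σj * b k)) k
    have h1 : (1:ℤ) ≤ b.repr (b j * (b (σ j) * b k)) k := by
      rw [← mul_assoc, mulrepr' (b j * b (σ j)) (b k) k]
      have hterm2 : ∀ m, 0 ≤ b.repr (b j * b (σ j)) m * b.repr (b m * b k) k :=
        fun m => mul_nonneg (hnn j (σ j) m) (hnn m k k)
      refine le_trans ?_ (Finset.single_le_sum (fun m _ => hterm2 m) (mem_univ i0))
      rw [hdual j (σ j), if_pos rfl, one_mul, hone, one_mul]
      simp [Module.Basis.repr_self]
    have h2 : b.repr (b j * (b (σ j) * b k)) k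
        = ∑ i, b.repr (b (σ j) * b k) i * b.repr (b j * b i) k := mulrepr _ _ _
    have h3 : 0 < ∑ p, b.repr (b j * b p) k := by
      rcases (Finset.sum_nonneg fun p _ => hterm p).lt_or_eq with h | h
      · exact h
      · exfalso
        have hall : ∀ p ∈ univ, b.repr (b j * b p) k = 0 :=
          (Finset.sum_eq_zero_iff_of_nonneg (fun p _ => hterm p)).mp h.symm
        rw [h2] at h1
        have : ∑ i, b.repr (b (σ j) * b k) i * b.repr (b j * b i) k = 0 :=
          Finset.sum_eq_zero fun i _ => by rw [hall i (mem_univ i), mul_zero]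
        omega
    have h4 : R k j = ((∑ p, b.repr (b j * b p) k : ℤ) : ℝ) := by
      rw [hRdef]
      simp only [Matrix.of_apply]
      rw [hreprz]
    rw [h4]
    exact_mod_cast h3
  -- Perron-Frobenius for R
  obtain ⟨t, htpos, v, hvpos, hRv, huniq⟩ := perron_exists R hRpos
  have hvne : v ≠ 0 := fun h => (hvpos i0).ne' (congrFun h i0)
  -- R commutes with each M i
  have hcomm : ∀ i, R * M i = M i * R := by
    intro i
    ext k j
    rw [Matrix.mul_apply, Matrix.mul_apply]
    have hL : ∑ m, R k m * M i m j
        = ((∑ m, b.repr (b m * z) k * b.repr (b i * b j) m : ℤ) : ℝ) := by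
      push_cast
      exact Finset.sum_congr rfl fun m _ => by simp only [hRdef, Matrix.of_apply, hM]; try ring
    have hRt : ∑ m, M i k m * R m j
        = ((∑ m, b.repr (b j * z) m * b.repr (b i * b m) k : ℤ) : ℝ) := by
      push_cast
      exact Finset.sum_congr rfl fun m _ => by simp only [hRdef, Matrix.of_apply, hM]; try ring
    rw [hL, hRt]
    congr 1
    have e1 : ∑ m, b.repr (b m * z) k * b.repr (b i * b j) m
        = b.repr ((b i * b j) * z) k := by
      rw [mulrepr' (b i * b j) z k]
      exact Finset.sum_congr rfl fun m _ => by ring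
    have e2 : ∑ m, b.repr (b j * z) m * b.repr (b i * b m) k
        = b.repr (b i * (b j * z)) k := (mulrepr (b i) (b j * z) k).symm
    rw [e1, e2, mul_assoc]
  -- common eigenvector
  have heig : ∀ i, ∃ d : ℝ, 0 ≤ d ∧ (M i).mulVec v = d • v := by
    intro i
    have hwnn : ∀ k, 0 ≤ (M i).mulVec v k := by
      intro k
      simp only [Matrix.mulVec, dotProduct]
      exact Finset.sum_nonneg fun j _ => mul_nonneg (hMnn i k j) (hvpos j).le
    have hweig : R.mulVec ((M i).mulVec v) = t • ((M i).mulVec v) := by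
      rw [Matrix.mulVec_mulVec, hcomm i, ← Matrix.mulVec_mulVec, hRv, Matrix.mulVec_smul]
    obtain ⟨c, hc⟩ := huniq _ hwnn hweig
    refine ⟨c, ?_, hc⟩
    have h1 : 0 ≤ (M i).mulVec v i0 := hwnn i0
    rw [hc] at h1
    simp only [Pi.smul_apply, smul_eq_mul] at h1
    by_contra h
    push_neg at h
    nlinarith [hvpos i0]
  choose d hd0 hdv using heig
  -- lam = d
  have hde : ∀ i, lam i = d i := by
    intro i
    obtain ⟨⟨hl0, w, hwne, hweig⟩, hmax⟩ := hlam i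
    have h1 : lam i ≤ d i :=
      eig_compare (M i) (hMnn i) v hvpos (d i) (hdv i) (lam i) hl0 w hwne hweig
    have h2 : d i ≤ lam i := hmax (d i) ⟨hd0 i, v, hvne, hdv i⟩
    linarith
  -- the character
  set ψ : A → ℝ := fun x => ∑ i, ((b.repr x i : ℤ) : ℝ) * d i with hψdef
  have hψb : ∀ i, ψ (b i) = d i := by
    intro i
    rw [hψdef]
    simp only
    rw [Finset.sum_eq_single i]
    · simp [Module.Basis.repr_self]
    · intro j _ hj
      simp [Module.Basis.repr_self, Finsupp.single_apply, Ne.symm hj]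
    · intro h; exact absurd (mem_univ i) h
  -- key identity
  have key : ∀ (x : A) (k : ι),
      ∑ j, ((b.repr (x * b j) k : ℤ) : ℝ) * v j = ψ x * v k := by
    intro x k
    have he : ∀ i, ∑ j, ((b.repr (b i * b j) k : ℤ) : ℝ) * v j = d i * v k := by
      intro i
      have h1 := congrFun (hdv i) k
      simp only [Matrix.mulVec, dotProduct, Pi.smul_apply, smul_eq_mul] at h1
      rw [← h1]
      exact Finset.sum_congr rfl fun j _ => by rw [hM]
    calc ∑ j, ((b.repr (x * b j) k : ℤ) : ℝ) * v j
        = ∑ j, (∑ i, ((b.repr x i : ℤ) : ℝ) * ((b.repr (b i * b j) k : ℤ) : ℝ)) * v j := by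
          refine Finset.sum_congr rfl fun j _ => ?_
          congr 1
          rw [mulrepr' x (b j) k]
          push_cast
          rfl
      _ = ∑ j, ∑ i, ((b.repr x i : ℤ) : ℝ) * (((b.repr (b i * b j) k : ℤ) : ℝ) * v j) := by
          refine Finset.sum_congr rfl fun j _ => ?_
          rw [Finset.sum_mul]
          exact Finset.sum_congr rfl fun i _ => by ring
      _ = ∑ i, ∑ j, ((b.repr x i : ℤ) : ℝ) * (((b.repr (b i * b j) k : ℤ) : ℝ) * v j) :=
          Finset.sum_comm
      _ = ∑ i, ((b.repr x i : ℤ) : ℝ) * ∑ j, ((b.repr (b i * b j) k : ℤ) : ℝ) * v j := by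
          exact Finset.sum_congr rfl fun i _ => (Finset.mul_sum _ _ _).symm
      _ = ∑ i, ((b.repr x i : ℤ) : ℝ) * (d i * v k) := by
          exact Finset.sum_congr rfl fun i _ => by rw [he i]
      _ = ψ x * v k := by
          rw [hψdef]
          simp only
          rw [Finset.sum_mul]
          exact Finset.sum_congr rfl fun i _ => by ring
  -- value at the unit
  have hMi0 : M i0 = 1 := by
    ext k j
    rw [hM, hone, one_mul]
    simp [Module.Basis.repr_self, Finsupp.single_apply, Matrix.one_apply, eq_comm]
  have hdi0 : d i0 = 1 := by
    have h1 := congrFun (hdv i0) i0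
    rw [hMi0, Matrix.one_mulVec] at h1
    simp only [Pi.smul_apply, smul_eq_mul] at h1
    have h2 : d i0 * v i0 = 1 * v i0 := by rw [one_mul, ← h1]
    exact mul_right_cancel₀ (hvpos i0).ne' h2
  have hψ1 : ψ 1 = 1 := by rw [← hone, hψb, hdi0]
  have hψadd : ∀ x y, ψ (x + y) = ψ x + ψ y := by
    intro x y
    rw [hψdef]
    simp only [map_add, Finsupp.add_apply]
    push_cast
    rw [← Finset.sum_add_distrib]
    exact Finset.sum_congr rfl fun i _ => by ring
  have hψmul : ∀ x y, ψ (x * y) = ψ x * ψ y := by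
    intro x y
    have h1 := key (x * y) i0
    have h2 : ∑ j, ((b.repr (x * y * b j) i0 : ℤ) : ℝ) * v j = ψ x * ψ y * v i0 := by
      calc ∑ j, ((b.repr (x * y * b j) i0 : ℤ) : ℝ) * v j
          = ∑ j, (∑ m, ((b.repr (y * b j) m : ℤ) : ℝ) * ((b.repr (x * b m) i0 : ℤ) : ℝ)) * v j := by
            refine Finset.sum_congr rfl fun j _ => ?_
            congr 1
            rw [mul_assoc, mulrepr x (y * b j) i0]
            push_cast
            rfl
        _ = ∑ j, ∑ m, ((b.repr (x * b m) i0 : ℤ) : ℝ) * (((b.repr (y * b j) m : ℤ) : ℝ) * v j) := by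
            refine Finset.sum_congr rfl fun j _ => ?_
            rw [Finset.sum_mul]
            exact Finset.sum_congr rfl fun m _ => by ring
        _ = ∑ m, ∑ j, ((b.repr (x * b m) i0 : ℤ) : ℝ) * (((b.repr (y * b j) m : ℤ) : ℝ) * v j) :=
            Finset.sum_comm
        _ = ∑ m, ((b.repr (x * b m) i0 : ℤ) : ℝ) * (ψ y * v m) := by
            refine Finset.sum_congr rfl fun m _ => ?_
            rw [← Finset.mul_sum, key y m]
        _ = ψ y * ∑ m, ((b.repr (x * b m) i0 : ℤ) : ℝ) * v m := by
            rw [Finset.mul_sum]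
            exact Finset.sum_congr rfl fun m _ => by ring
        _ = ψ x * ψ y * v i0 := by rw [key x i0]; ring
    have h3 : ψ (x * y) * v i0 = ψ x * ψ y * v i0 := by rw [← h1, h2]
    exact mul_right_cancel₀ (hvpos i0).ne' h3
  have hψ0 : ψ 0 = 0 := by rw [hψdef]; simp
  let φ : A →+* ℝ :=
    { toFun := ψ
      map_one' := hψ1
      map_mul' := hψmul
      map_zero' := hψ0
      map_add' := hψadd }
  refine ⟨φ, fun i => ?_⟩
  show ψ (b i) = lam i
  rw [hψb, hde]
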